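/- Dedekind reciprocity: for coprime positive integers a, b, s(b,a) + s(a,b) = -1/4 + (1/12)·(a/b + b/a + 1/(ab)). -/

import Mathlib

open Finset

/-- The sawtooth function `((x))`. -/
noncomputable def sawtooth (x : ℚ) : ℚ := if x.den = 1 then 0 else x - ⌊x⌋ - 1/2

/-- The Dedekind sum `s(b, a) = ∑_{k=1}^{a} ((k/a)) ((kb/a))`. -/
noncomputable def dedekindSum (b a : ℤ) : ℚ :=
  ∑ k ∈ Finset.Icc (1 : ℤ) a, sawtooth ((k : ℚ) / a) * sawtooth (((k * b : ℤ) : ℚ) / a)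

lemma dr_saw_dvd {n a : ℤ} (ha : a ≠ 0) (h : a ∣ n) : sawtooth ((n:ℚ)/a) = 0 := by
  obtain ⟨m, rfl⟩ := h
  have : ((a*m : ℤ):ℚ)/a = ((m:ℤ):ℚ) := by
    push_cast
    field_simp
  rw [this, sawtooth, if_pos (Rat.den_intCast m)]

lemma dr_saw_eval {n a : ℤ} (ha : 0 < a) (h : ¬ a ∣ n) :
    sawtooth ((n:ℚ)/a) = ((n % a : ℤ):ℚ)/a - 1/2 := by
  have haQ : (a:ℚ) ≠ 0 := Int.cast_ne_zero.mpr ha.ne'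
  have hden : ((n:ℚ)/a).den ≠ 1 := by
    intro hd
    apply h
    have h2 := (Rat.den_eq_one_iff _).mp hd
    have h3 : (((n:ℚ)/a).num : ℚ) * a = n := by
      rw [h2]; field_simp
    have h4 : (((n:ℚ)/a).num) * a = n := by exact_mod_cast h3
    exact Dvd.intro_left _ h4
  rw [sawtooth, if_neg hden]
  have hfloor : ⌊(n:ℚ)/a⌋ = n / a := by
    have h1 : ((a.toNat : ℕ) : ℚ) = (a:ℚ) := by exact_mod_cast congrArg (fun z:ℤ => (z:ℚ)) (Int.toNat_of_nonneg ha.le)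
    rw [← h1, Rat.floor_intCast_div_natCast, Int.toNat_of_nonneg ha.le]
  rw [hfloor]
  have hQ : (a:ℚ) * ((n/a : ℤ):ℚ) + ((n % a : ℤ):ℚ) = (n:ℚ) := by
    exact_mod_cast congrArg (fun z:ℤ => (z:ℚ)) (Int.mul_ediv_add_emod n a)
  have hrepr : (n:ℚ)/a = ((n/a : ℤ):ℚ) + ((n % a : ℤ):ℚ)/a := by
    field_simp
    linarith [hQ]
  rw [hrepr]
  ring

lemma dr_Ico_insert {n : ℤ} (hn : 1 ≤ n) : Ico (1:ℤ) (n+1) = insert n (Ico 1 n) := by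
  ext x
  simp only [Finset.mem_Ico, Finset.mem_insert]
  omega

lemma dr_gauss1 (n : ℤ) (hn : 0 ≤ n) : ∑ k ∈ Ico (1:ℤ) n, (k:ℚ) = n*(n-1)/2 := by
  refine Int.le_induction (motive := fun n _ => ∑ k ∈ Ico (1:ℤ) n, (k:ℚ) = n*(n-1)/2) ?_ ?_ n hn
  · simp
  · intro n hn ih
    rcases eq_or_lt_of_le hn with h | h
    · rw [← h]; norm_num
    · rw [dr_Ico_insert (by omega), Finset.sum_insert (by simp), ih]
      push_cast
      ring

lemma dr_gauss2 (n : ℤ) (hn : 0 ≤ n) : ∑ k ∈ Ico (1:ℤ) n, (k:ℚ)^2 = n*(n-1)*(2*n-1)/6 := by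
  refine Int.le_induction (motive := fun n _ => ∑ k ∈ Ico (1:ℤ) n, (k:ℚ)^2 = n*(n-1)*(2*n-1)/6) ?_ ?_ n hn
  · simp
  · intro n hn ih
    rcases eq_or_lt_of_le hn with h | h
    · rw [← h]; norm_num
    · rw [dr_Ico_insert (by omega), Finset.sum_insert (by simp), ih]
      push_cast
      ring



lemma dr_emod_mul_inv {a b v u k : ℤ} (ha : 0 < a) (huv : u*a + v*b = 1)
    (h1 : 1 ≤ k) (h2 : k < a) : (k*b % a) * v % a = k := by
  have e1 : (k*b % a) * v % a = k*b*v % a := by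
    rw [Int.mul_emod, Int.emod_emod_of_dvd _ dvd_rfl, ← Int.mul_emod]
  have e2 : k*b*v = k + a * (-(k*u)) := by linear_combination k*huv
  rw [e1, e2, Int.add_mul_emod_self_left, Int.emod_eq_of_lt (by omega) h2]

lemma dr_mem_image_mod {a c k : ℤ} (ha : 0 < a) (hcop : IsCoprime a c)
    (hk : k ∈ Ico (1:ℤ) a) : k*c % a ∈ Ico (1:ℤ) a := by
  rw [Finset.mem_Ico] at hk ⊢
  have h0 : 0 ≤ k*c % a := Int.emod_nonneg _ (by omega)
  have h1 : k*c % a < a := Int.emod_lt_of_pos _ ha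
  refine ⟨?_, h1⟩
  rcases eq_or_lt_of_le h0 with h | h
  · exfalso
    have hdvd : a ∣ k*c := Int.dvd_of_emod_eq_zero h.symm
    have := hcop.dvd_of_dvd_mul_right hdvd
    have := Int.le_of_dvd (by omega) this
    omega
  · omega

lemma dr_perm_sum {a b : ℤ} (ha : 0 < a) (hco : IsCoprime a b) (f : ℤ → ℚ) :
    ∑ k ∈ Ico (1:ℤ) a, f (k*b % a) = ∑ k ∈ Ico (1:ℤ) a, f k := by
  obtain ⟨u, v, huv⟩ := hco
  have hco' : IsCoprime a b := ⟨u, v, huv⟩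
  have hcov : IsCoprime a v := ⟨u, b, by linear_combination huv⟩
  refine Finset.sum_nbij' (fun k => k*b % a) (fun k => k*v % a) ?_ ?_ ?_ ?_ ?_
  · exact fun k hk => dr_mem_image_mod ha hco' hk
  · exact fun k hk => dr_mem_image_mod ha hcov hk
  · intro k hk
    rw [Finset.mem_Ico] at hk
    exact dr_emod_mul_inv ha huv hk.1 hk.2
  · intro k hk
    rw [Finset.mem_Ico] at hk
    exact dr_emod_mul_inv (u := u) ha (by linear_combination huv) hk.1 hk.2
  · intro k _
    rfl

lemma dr_filter_eq {a b k : ℤ} (ha : 0 < a) (hb : 0 < b) (hk1 : 1 ≤ k) (hk2 : k < a)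
    (hnd : ¬ a ∣ k*b) :
    filter (fun m => m*a < k*b) (Ico (1:ℤ) b) = Ico 1 (k*b/a + 1) := by
  have ht := Int.mul_ediv_add_emod (k*b) a
  have hr1 : 0 < k*b % a := by
    rcases eq_or_lt_of_le (Int.emod_nonneg (k*b) (by omega : a ≠ 0)) with h | h
    · exact absurd (Int.dvd_of_emod_eq_zero h.symm) hnd
    · exact h
  have hr2 : k*b % a < a := Int.emod_lt_of_pos _ ha
  have hkb : k*b ≤ (a-1)*b := mul_le_mul_of_nonneg_right (by omega) hb.le
  ext m
  simp only [Finset.mem_filter, Finset.mem_Ico]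
  constructor
  · rintro ⟨⟨h1, _⟩, h3⟩
    refine ⟨h1, ?_⟩
    have hma : m*a < (k*b/a + 1)*a := by
      have : (k*b/a + 1)*a = a*(k*b/a) + a := by ring
      rw [this]
      omega
    have := lt_of_mul_lt_mul_right hma ha.le
    omega
  · rintro ⟨h1, h2⟩
    have hmt : m ≤ k*b/a := by omega
    have hmta : m*a ≤ (k*b/a)*a := mul_le_mul_of_nonneg_right hmt ha.le
    have h4 : m*a < k*b := by
      have : (k*b/a)*a = a*(k*b/a) := by ring
      omega
    refine ⟨⟨h1, ?_⟩, h4⟩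
    -- m < b: since a*(k*b/a) = k*b - r ≤ (a-1)*b - 1 < a*b
    by_contra hmb
    push_neg at hmb
    have : b*a ≤ m*a := mul_le_mul_of_nonneg_right hmb ha.le
    nlinarith

lemma dr_inner_sum {a b k : ℤ} (ha : 0 < a) (hb : 0 < b) (hk1 : 1 ≤ k) (hk2 : k < a)
    (hnd : ¬ a ∣ k*b) :
    ∑ m ∈ Ico (1:ℤ) b, (if m*a < k*b then ((k:ℚ)+(m:ℚ)) else 0)
      = (2*(a:ℚ)*(k:ℚ)*((k:ℚ)*(b:ℚ) - ((k*b % a : ℤ):ℚ)) + ((k:ℚ)*(b:ℚ) - ((k*b % a : ℤ):ℚ))^2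
          + (a:ℚ)*((k:ℚ)*(b:ℚ) - ((k*b % a : ℤ):ℚ)))/(2*(a:ℚ)^2) := by
  have haQ : (a:ℚ) ≠ 0 := Int.cast_ne_zero.mpr (by omega)
  have hr := Int.mul_ediv_add_emod (k*b) a
  have ht0 : (0:ℤ) ≤ k*b/a := Int.ediv_nonneg (by positivity) ha.le
  rw [← Finset.sum_filter, dr_filter_eq ha hb hk1 hk2 hnd]
  rw [Finset.sum_add_distrib, Finset.sum_const, dr_gauss1 (k*b/a + 1) (by omega)]
  have hcard : (Ico (1:ℤ) (k*b/a + 1)).card = (k*b/a).toNat := by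
    rw [Int.card_Ico]
    congr 1
    omega
  rw [hcard, nsmul_eq_mul]
  have htn : (((k*b/a).toNat : ℕ) : ℚ) = ((k*b/a : ℤ) : ℚ) := by
    exact_mod_cast congrArg (fun z : ℤ => (z:ℚ)) (Int.toNat_of_nonneg ht0)
  have hrQ : (a:ℚ) * ((k*b/a : ℤ):ℚ) + ((k*b % a : ℤ):ℚ) = (k:ℚ)*(b:ℚ) := by
    have := congrArg (fun z : ℤ => (z:ℚ)) hr
    push_cast at this
    linarith
  have haT : ((k*b % a : ℤ):ℚ) = (k:ℚ)*(b:ℚ) - (a:ℚ)*((k*b/a : ℤ):ℚ) := by linarith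
  rw [htn, haT]
  field_simp
  push_cast
  ring

lemma dr_ded_eval {a b : ℤ} (ha : 1 ≤ a) (hco : IsCoprime a b) :
    dedekindSum b a
      = (∑ k ∈ Ico (1:ℤ) a, (k:ℚ) * ((k*b % a : ℤ):ℚ)) / (a:ℚ)^2 - ((a:ℚ)-1)/4 := by
  have ha0 : (0:ℤ) < a := ha
  have haQ : (a:ℚ) ≠ 0 := Int.cast_ne_zero.mpr (by omega)
  have hIcc : Finset.Icc (1:ℤ) a = insert a (Ico 1 a) := by
    ext x
    simp only [Finset.mem_Icc, Finset.mem_insert, Finset.mem_Ico]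
    omega
  rw [dedekindSum, hIcc, Finset.sum_insert (by simp)]
  have htop : sawtooth ((a:ℚ)/a) = 0 := dr_saw_dvd (by omega) dvd_rfl
  rw [htop, zero_mul, zero_add]
  have hterm : ∀ k ∈ Ico (1:ℤ) a,
      sawtooth ((k:ℚ)/a) * sawtooth (((k*b : ℤ):ℚ)/a)
        = (k:ℚ)*((k*b % a : ℤ):ℚ)/(a:ℚ)^2 - (k:ℚ)/(2*a) - ((k*b % a : ℤ):ℚ)/(2*a) + 1/4 := by
    intro k hk
    rw [Finset.mem_Ico] at hk
    have hndk : ¬ a ∣ k := fun h => by have := Int.le_of_dvd (by omega) h; omega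
    have hndkb : ¬ a ∣ k*b := fun h => hndk (hco.dvd_of_dvd_mul_right h)
    rw [dr_saw_eval ha0 hndk, dr_saw_eval ha0 hndkb, Int.emod_eq_of_lt (by omega) hk.2]
    ring
  rw [Finset.sum_congr rfl hterm]
  have hpermr : ∑ k ∈ Ico (1:ℤ) a, ((k*b % a : ℤ):ℚ) = ∑ k ∈ Ico (1:ℤ) a, (k:ℚ) :=
    dr_perm_sum ha0 hco (fun x => (x:ℚ))
  have hcard : ((Ico (1:ℤ) a).card : ℚ) = (a:ℚ) - 1 := by
    rw [Int.card_Ico]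
    exact_mod_cast congrArg (fun z : ℤ => (z:ℚ)) (Int.toNat_of_nonneg (by omega : (0:ℤ) ≤ a - 1))
  rw [Finset.sum_add_distrib, Finset.sum_sub_distrib, Finset.sum_sub_distrib,
    Finset.sum_const, nsmul_eq_mul, ← Finset.sum_div, ← Finset.sum_div, ← Finset.sum_div,
    hpermr, dr_gauss1 a (by omega), hcard]
  field_simp
  ring

theorem dedekind_reciprocity (a b : ℤ) (ha : 1 ≤ a) (hb : 1 ≤ b) (hab : Int.gcd a b = 1) :
    dedekindSum b a + dedekindSum a b
      = -1/4 + (1/12) * ((a : ℚ) / b + (b : ℚ) / a + 1 / ((a : ℚ) * b)) := by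
  have hco : IsCoprime a b := Int.isCoprime_iff_gcd_eq_one.mpr hab
  have hco' : IsCoprime b a := hco.symm
  have ha0 : (0:ℤ) < a := ha
  have hb0 : (0:ℤ) < b := hb
  have haQ : (a:ℚ) ≠ 0 := Int.cast_ne_zero.mpr (by omega)
  have hbQ : (b:ℚ) ≠ 0 := Int.cast_ne_zero.mpr (by omega)
  have ha1Q : (1:ℚ) ≤ (a:ℚ) := by exact_mod_cast ha
  have hb1Q : (1:ℚ) ≤ (b:ℚ) := by exact_mod_cast hb
  have hnda : ∀ k, 1 ≤ k → k < a → ¬ a ∣ k*b := by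
    intro k h1 h2 h
    have hk := hco.dvd_of_dvd_mul_right h
    have := Int.le_of_dvd (by omega) hk
    omega
  have hndb : ∀ m, 1 ≤ m → m < b → ¬ b ∣ m*a := by
    intro m h1 h2 h
    have hk := hco'.dvd_of_dvd_mul_right h
    have := Int.le_of_dvd (by omega) hk
    omega
  have hcarda : ((Ico (1:ℤ) a).card : ℚ) = (a:ℚ) - 1 := by
    rw [Int.card_Ico]
    exact_mod_cast congrArg (fun z : ℤ => (z:ℚ)) (Int.toNat_of_nonneg (by omega : (0:ℤ) ≤ a - 1))
  have hcardb : ((Ico (1:ℤ) b).card : ℚ) = (b:ℚ) - 1 := by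
    rw [Int.card_Ico]
    exact_mod_cast congrArg (fun z : ℤ => (z:ℚ)) (Int.toNat_of_nonneg (by omega : (0:ℤ) ≤ b - 1))
  set A : ℚ := ∑ k ∈ Ico (1:ℤ) a, (k:ℚ) * ((k*b % a : ℤ):ℚ) with hA
  set B : ℚ := ∑ m ∈ Ico (1:ℤ) b, (m:ℚ) * ((m*a % b : ℤ):ℚ) with hB
  set s1 : ℚ := ∑ k ∈ Ico (1:ℤ) a, ∑ m ∈ Ico (1:ℤ) b,
      (if m*a < k*b then ((k:ℚ)+(m:ℚ)) else 0) with hs1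
  set s2 : ℚ := ∑ m ∈ Ico (1:ℤ) b, ∑ k ∈ Ico (1:ℤ) a,
      (if k*b < m*a then ((m:ℚ)+(k:ℚ)) else 0) with hs2
  -- total double sum
  have htot : s1 + s2 = ((b:ℚ)-1)*((a:ℚ)*((a:ℚ)-1)/2) + ((a:ℚ)-1)*((b:ℚ)*((b:ℚ)-1)/2) := by
    have hcomm : s2 = ∑ k ∈ Ico (1:ℤ) a, ∑ m ∈ Ico (1:ℤ) b,
        (if k*b < m*a then ((m:ℚ)+(k:ℚ)) else 0) := by
      rw [hs2]
      exact Finset.sum_comm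
    have step1 : s1 + s2 = ∑ k ∈ Ico (1:ℤ) a, ∑ m ∈ Ico (1:ℤ) b, ((k:ℚ)+(m:ℚ)) := by
      rw [hs1, hcomm, ← Finset.sum_add_distrib]
      apply Finset.sum_congr rfl
      intro k hk
      rw [← Finset.sum_add_distrib]
      apply Finset.sum_congr rfl
      intro m hm
      rw [Finset.mem_Ico] at hk hm
      have hne : m*a ≠ k*b := by
        intro h
        exact hnda k hk.1 hk.2 (h ▸ dvd_mul_left a m)
      rcases lt_or_gt_of_ne hne with h | h
      · rw [if_pos h, if_neg (by omega)]
        ring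
      · rw [if_neg (by omega), if_pos h]
        ring
    rw [step1]
    have hinner : ∀ k ∈ Ico (1:ℤ) a, ∑ m ∈ Ico (1:ℤ) b, ((k:ℚ)+(m:ℚ))
        = ((b:ℚ)-1)*(k:ℚ) + (b:ℚ)*((b:ℚ)-1)/2 := by
      intro k _
      rw [Finset.sum_add_distrib, Finset.sum_const, nsmul_eq_mul, hcardb, dr_gauss1 b (by omega)]
    rw [Finset.sum_congr rfl hinner, Finset.sum_add_distrib, Finset.sum_const, nsmul_eq_mul,
      hcarda, ← Finset.mul_sum, dr_gauss1 a (by omega)]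
  -- side 1
  have hside1 : 2*(a:ℚ)^2 * s1
      = (2*(a:ℚ)*(b:ℚ) + (b:ℚ)^2 + 1)*((a:ℚ)*((a:ℚ)-1)*(2*(a:ℚ)-1)/6)
        + ((a:ℚ)*(b:ℚ) - (a:ℚ))*((a:ℚ)*((a:ℚ)-1)/2) - (2*(a:ℚ)+2*(b:ℚ))*A := by
    have hin : ∀ k ∈ Ico (1:ℤ) a,
        ∑ m ∈ Ico (1:ℤ) b, (if m*a < k*b then ((k:ℚ)+(m:ℚ)) else 0)
          = (2*(a:ℚ)*(k:ℚ)*((k:ℚ)*(b:ℚ) - ((k*b % a : ℤ):ℚ))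
              + ((k:ℚ)*(b:ℚ) - ((k*b % a : ℤ):ℚ))^2
              + (a:ℚ)*((k:ℚ)*(b:ℚ) - ((k*b % a : ℤ):ℚ)))/(2*(a:ℚ)^2) := by
      intro k hk
      rw [Finset.mem_Ico] at hk
      exact dr_inner_sum ha0 hb0 hk.1 hk.2 (hnda k hk.1 hk.2)
    rw [hs1, Finset.sum_congr rfl hin, ← Finset.sum_div, mul_comm (2*(a:ℚ)^2),
      div_mul_cancel₀ _ (by positivity)]
    have hexp : ∀ k ∈ Ico (1:ℤ) a,
        (2*(a:ℚ)*(k:ℚ)*((k:ℚ)*(b:ℚ) - ((k*b % a : ℤ):ℚ))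
            + ((k:ℚ)*(b:ℚ) - ((k*b % a : ℤ):ℚ))^2
            + (a:ℚ)*((k:ℚ)*(b:ℚ) - ((k*b % a : ℤ):ℚ)))
          = (2*(a:ℚ)*(b:ℚ) + (b:ℚ)^2)*(k:ℚ)^2 + ((k*b % a : ℤ):ℚ)^2
              - (2*(a:ℚ)+2*(b:ℚ))*((k:ℚ)*((k*b % a : ℤ):ℚ))
              + (a:ℚ)*(b:ℚ)*(k:ℚ) - (a:ℚ)*((k*b % a : ℤ):ℚ) := by
      intro k _
      ring
    rw [Finset.sum_congr rfl hexp]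
    simp only [Finset.sum_add_distrib, Finset.sum_sub_distrib, ← Finset.mul_sum]
    have hp1 : ∑ k ∈ Ico (1:ℤ) a, ((k*b % a : ℤ):ℚ)^2 = ∑ k ∈ Ico (1:ℤ) a, (k:ℚ)^2 :=
      dr_perm_sum ha0 hco (fun x => (x:ℚ)^2)
    have hp2 : ∑ k ∈ Ico (1:ℤ) a, ((k*b % a : ℤ):ℚ) = ∑ k ∈ Ico (1:ℤ) a, (k:ℚ) :=
      dr_perm_sum ha0 hco (fun x => (x:ℚ))
    rw [hp1, hp2, dr_gauss1 a (by omega), dr_gauss2 a (by omega), ← hA]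
    ring
  -- side 2
  have hside2 : 2*(b:ℚ)^2 * s2
      = (2*(b:ℚ)*(a:ℚ) + (a:ℚ)^2 + 1)*((b:ℚ)*((b:ℚ)-1)*(2*(b:ℚ)-1)/6)
        + ((b:ℚ)*(a:ℚ) - (b:ℚ))*((b:ℚ)*((b:ℚ)-1)/2) - (2*(b:ℚ)+2*(a:ℚ))*B := by
    have hin : ∀ m ∈ Ico (1:ℤ) b,
        ∑ k ∈ Ico (1:ℤ) a, (if k*b < m*a then ((m:ℚ)+(k:ℚ)) else 0)
          = (2*(b:ℚ)*(m:ℚ)*((m:ℚ)*(a:ℚ) - ((m*a % b : ℤ):ℚ))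
              + ((m:ℚ)*(a:ℚ) - ((m*a % b : ℤ):ℚ))^2
              + (b:ℚ)*((m:ℚ)*(a:ℚ) - ((m*a % b : ℤ):ℚ)))/(2*(b:ℚ)^2) := by
      intro m hm
      rw [Finset.mem_Ico] at hm
      exact dr_inner_sum hb0 ha0 hm.1 hm.2 (hndb m hm.1 hm.2)
    rw [hs2, Finset.sum_congr rfl hin, ← Finset.sum_div, mul_comm (2*(b:ℚ)^2),
      div_mul_cancel₀ _ (by positivity)]
    have hexp : ∀ m ∈ Ico (1:ℤ) b,
        (2*(b:ℚ)*(m:ℚ)*((m:ℚ)*(a:ℚ) - ((m*a % b : ℤ):ℚ))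
            + ((m:ℚ)*(a:ℚ) - ((m*a % b : ℤ):ℚ))^2
            + (b:ℚ)*((m:ℚ)*(a:ℚ) - ((m*a % b : ℤ):ℚ)))
          = (2*(b:ℚ)*(a:ℚ) + (a:ℚ)^2)*(m:ℚ)^2 + ((m*a % b : ℤ):ℚ)^2
              - (2*(b:ℚ)+2*(a:ℚ))*((m:ℚ)*((m*a % b : ℤ):ℚ))
              + (b:ℚ)*(a:ℚ)*(m:ℚ) - (b:ℚ)*((m*a % b : ℤ):ℚ) := by
      intro m _
      ring
    rw [Finset.sum_congr rfl hexp]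
    simp only [Finset.sum_add_distrib, Finset.sum_sub_distrib, ← Finset.mul_sum]
    have hp1 : ∑ m ∈ Ico (1:ℤ) b, ((m*a % b : ℤ):ℚ)^2 = ∑ m ∈ Ico (1:ℤ) b, (m:ℚ)^2 :=
      dr_perm_sum hb0 hco' (fun x => (x:ℚ)^2)
    have hp2 : ∑ m ∈ Ico (1:ℤ) b, ((m*a % b : ℤ):ℚ) = ∑ m ∈ Ico (1:ℤ) b, (m:ℚ) :=
      dr_perm_sum hb0 hco' (fun x => (x:ℚ))
    rw [hp1, hp2, dr_gauss1 b (by omega), dr_gauss2 b (by omega), ← hB]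
    ring
  -- combine
  have hAB : A*(b:ℚ)^2 + B*(a:ℚ)^2
      = ((a:ℚ)*(b:ℚ) + (a:ℚ)*(b:ℚ)^3 + (a:ℚ)^3*(b:ℚ) - 9*(a:ℚ)^2*(b:ℚ)^2
          + 3*(a:ℚ)^2*(b:ℚ)^3 + 3*(a:ℚ)^3*(b:ℚ)^2)/12 := by
    have h2 : (2:ℚ)*((a:ℚ)+(b:ℚ)) ≠ 0 := by
      have : (0:ℚ) < 2*((a:ℚ)+(b:ℚ)) := by linarith
      exact this.ne'
    apply mul_left_cancel₀ h2
    linear_combination (b:ℚ)^2*hside1 + (a:ℚ)^2*hside2 - 2*(a:ℚ)^2*(b:ℚ)^2*htot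
  clear_value A B s1 s2
  rw [dr_ded_eval ha hco, dr_ded_eval hb hco', ← hA, ← hB]
  have hgoal : A/(a:ℚ)^2 + B/(b:ℚ)^2 = (A*(b:ℚ)^2 + B*(a:ℚ)^2)/((a:ℚ)^2*(b:ℚ)^2) := by
    field_simp
  calc A/(a:ℚ)^2 - ((a:ℚ)-1)/4 + (B/(b:ℚ)^2 - ((b:ℚ)-1)/4)
      = (A*(b:ℚ)^2 + B*(a:ℚ)^2)/((a:ℚ)^2*(b:ℚ)^2) - ((a:ℚ)-1)/4 - ((b:ℚ)-1)/4 := by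
        rw [← hgoal]
        ring
    _ = -1/4 + (1/12) * ((a : ℚ) / b + (b : ℚ) / a + 1 / ((a : ℚ) * b)) := by
        rw [hAB]
        field_simp
        ring
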